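/- The luckiness model complexity of the N-sample exponential model with luckiness the indicator of [θ_min, θ_max] equals (N^N/Γ(N))·e^{−N}·(log θ_max − log θ_min). That is, ∫_{(ℝ≥0)^N} p[(μ_{θ̂(x)})^N](x) · 1{θ̂(x) ∈ [θ_min, θ_max]} dL^N(x) = (N^N/Γ(N))·e^{−N}·log(θ_max/θ_min), where θ̂ is the sample mean. -/

import Mathlib

open MeasureTheory
open scoped ENNReal

lemma translate_lintegral (g : ℝ → ℝ≥0∞) (hg : Measurable g) (y : ℝ) :
    ∫⁻ s in Set.Ioi (0:ℝ), g (y + s) ∂volume = ∫⁻ u in Set.Ioi y, g u ∂volume := by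
  have h := (measurePreserving_add_right (volume : Measure ℝ) y).setLIntegral_comp_preimage
    (measurableSet_Ioi (a := y)) hg
  have hpre : (· + y) ⁻¹' Set.Ioi y = Set.Ioi (0:ℝ) := by
    ext x; simp [lt_add_iff_pos_left]
  rw [hpre] at h
  simpa [add_comm] using h

lemma inner_pow (m : ℕ) (u : ℝ) (hu : 0 < u) :
    ∫⁻ y in Set.Ioo (0:ℝ) u, ENNReal.ofReal ((u - y) ^ m / (Nat.factorial m : ℝ)) ∂volume
      = ENNReal.ofReal (u ^ (m + 1) / (Nat.factorial (m+1) : ℝ)) := by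
  have hint : IntegrableOn (fun y : ℝ => (u - y) ^ m / (Nat.factorial m : ℝ)) (Set.Ioo 0 u) volume := by
    apply (Continuous.integrableOn_Icc (a := 0) (b := u) (by continuity)).mono_set
    exact Set.Ioo_subset_Icc_self
  rw [← ofReal_integral_eq_lintegral_ofReal hint ?nn]
  case nn =>
    filter_upwards [ae_restrict_mem measurableSet_Ioo] with y hy
    have : 0 ≤ u - y := by linarith [hy.2]
    positivity
  congr 1
  rw [← integral_Ioc_eq_integral_Ioo, ← intervalIntegral.integral_of_le hu.le]
  rw [intervalIntegral.integral_div]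
  have : ∫ y in (0:ℝ)..u, (u - y) ^ m = ∫ x in (u - u)..(u - 0), x ^ m := by
    simpa using intervalIntegral.integral_comp_sub_left (a := 0) (b := u) (fun x => x ^ m) u
  rw [this]
  simp only [sub_self, sub_zero, integral_pow, ne_eq]
  rw [Nat.factorial_succ]
  push_cast
  field_simp
  simp

lemma key : ∀ (n : ℕ) (f : ℝ → ℝ≥0∞), Measurable f →
    ∫⁻ x in {x : Fin (n+1) → ℝ | ∀ i, 0 ≤ x i}, f (∑ i, x i) ∂volume
      = ∫⁻ s in Set.Ioi (0:ℝ), f s * ENNReal.ofReal (s ^ n / (Nat.factorial n : ℝ)) ∂volume := by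
  intro n
  induction n with
  | zero =>
    intro f hf
    have h := ((volume_preserving_funUnique (Fin 1) ℝ).symm).setLIntegral_comp_preimage_emb
      (MeasurableEquiv.measurableEmbedding _) (fun x => f (∑ i, x i))
      {x : Fin 1 → ℝ | ∀ i, 0 ≤ x i}
    have hpre : (MeasurableEquiv.funUnique (Fin 1) ℝ).symm ⁻¹' {x : Fin 1 → ℝ | ∀ i, 0 ≤ x i}
        = Set.Ici (0:ℝ) := by
      ext a
      simp [MeasurableEquiv.funUnique, Set.mem_setOf_eq]
    rw [hpre] at h
    simp only [pow_zero, Nat.factorial_zero, Nat.cast_one, div_one, ENNReal.ofReal_one, mul_one]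
    refine h.symm.trans ?_
    rw [← restrict_Ioi_eq_restrict_Ici]
    congr 1
    ext a
    congr 1
    simp [MeasurableEquiv.funUnique]
  | succ n ih =>
    intro f hf
    -- measurability helpers
    have hsum : Measurable (fun z : Fin (n+1) → ℝ => ∑ j, z j) :=
      Finset.univ.measurable_sum (fun j _ => measurable_pi_apply j)
    set c : ℝ := (Nat.factorial n : ℝ) with hc
    have hcpos : (0:ℝ) < c := by positivity
    set F : ℝ → ℝ → ℝ≥0∞ := fun y u => f u * ENNReal.ofReal ((u - y) ^ n / c) with hF
    have hFm : Measurable (fun p : ℝ × ℝ => F p.1 p.2) := by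
      apply (hf.comp measurable_snd).mul
      exact ENNReal.measurable_ofReal.comp
        ((((measurable_snd.sub measurable_fst).pow_const n).div_const c))
    -- Step 1: split off the first coordinate
    have e := MeasurableEquiv.piFinSuccAbove (fun _ : Fin (n+2) => ℝ) 0
    have hmp := (measurePreserving_piFinSuccAbove (fun _ : Fin (n+2) => (volume : Measure ℝ)) 0).symm
    have h1 := hmp.setLIntegral_comp_preimage_emb
      (MeasurableEquiv.measurableEmbedding _) (fun x => f (∑ i, x i))
      {x : Fin (n+2) → ℝ | ∀ i, 0 ≤ x i}
    have hps : ∀ p : ℝ × (Fin (n+1) → ℝ),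
        (MeasurableEquiv.piFinSuccAbove (fun _ : Fin (n+2) => ℝ) 0).symm p = Fin.cons p.1 p.2 := by
      intro p
      simp [MeasurableEquiv.piFinSuccAbove_symm_apply, Fin.insertNthEquiv, Fin.insertNth_zero]
    have hpre : (MeasurableEquiv.piFinSuccAbove (fun _ : Fin (n+2) => ℝ) 0).symm ⁻¹'
        {x : Fin (n+2) → ℝ | ∀ i, 0 ≤ x i}
        = (Set.Ici (0:ℝ)) ×ˢ {z : Fin (n+1) → ℝ | ∀ j, 0 ≤ z j} := by
      ext p
      simp only [Set.mem_preimage, hps, Set.mem_setOf_eq, Set.mem_prod, Set.mem_Ici]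
      constructor
      · intro h
        exact ⟨by simpa using h 0, fun j => by simpa using h j.succ⟩
      · intro h i
        refine Fin.cases ?_ ?_ i
        · simpa using h.1
        · intro j; simpa using h.2 j
    rw [hpre] at h1
    have h1' : ∫⁻ x in {x : Fin (n+2) → ℝ | ∀ i, 0 ≤ x i}, f (∑ i, x i) ∂volume
        = ∫⁻ p in (Set.Ici (0:ℝ)) ×ˢ {z : Fin (n+1) → ℝ | ∀ j, 0 ≤ z j},
            f (p.1 + ∑ j, p.2 j) ∂((volume : Measure ℝ).prod (volume : Measure (Fin (n+1) → ℝ))) := by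
      rw [volume_pi, ← h1]
      have : (volume : Measure (Fin (n+1) → ℝ)) = Measure.pi fun _ => volume := volume_pi
      rw [this]
      apply lintegral_congr
      intro p
      congr 1
      rw [hps]
      exact Fin.sum_cons p.1 p.2
    rw [h1', ← Measure.prod_restrict]
    rw [lintegral_prod (fun p : ℝ × (Fin (n+1) → ℝ) => f (p.1 + ∑ j, p.2 j)) ((hf.comp (measurable_fst.add (hsum.comp measurable_snd))).aemeasurable)]
    -- inner integral via ih and translation
    have h2 : ∀ y : ℝ, ∫⁻ z in {z : Fin (n+1) → ℝ | ∀ j, 0 ≤ z j}, f (y + ∑ j, z j) ∂volume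
        = ∫⁻ u in Set.Ioi y, F y u ∂volume := by
      intro y
      rw [ih (fun s => f (y + s)) (hf.comp (measurable_const.add measurable_id))]
      have hg : Measurable (fun u => F y u) := by
        apply hf.mul
        exact ENNReal.measurable_ofReal.comp
          (((measurable_id.sub_const y).pow_const n).div_const c)
      rw [← translate_lintegral _ hg y]
      apply lintegral_congr
      intro s
      simp [hF]
    simp only [h2]
    rw [← restrict_Ioi_eq_restrict_Ici]
    set G : ℝ × ℝ → ℝ≥0∞ := fun p =>
      (Set.Ioi (0:ℝ)).indicator (fun _ => 1) p.1 *
        ({q : ℝ × ℝ | q.1 < q.2}.indicator (fun _ => 1) p * F p.1 p.2) with hG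
    have hGm : Measurable G := by
      apply Measurable.mul
      · exact (measurable_const.indicator measurableSet_Ioi).comp measurable_fst
      · exact (measurable_const.indicator
          (measurableSet_lt measurable_fst measurable_snd)).mul hFm
    have h3 : ∫⁻ y in Set.Ioi (0:ℝ), ∫⁻ u in Set.Ioi y, F y u ∂volume ∂volume
        = ∫⁻ y, ∫⁻ u, G (y, u) ∂volume ∂volume := by
      rw [← lintegral_indicator measurableSet_Ioi _]
      apply lintegral_congr; intro y
      by_cases hy : y ∈ Set.Ioi (0:ℝ)
      · rw [Set.indicator_of_mem hy]
        rw [← lintegral_indicator measurableSet_Ioi _]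
        apply lintegral_congr; intro u
        by_cases hu : y < u <;>
          simp [hG, Set.indicator_apply, Set.mem_Ioi.mp hy, hu]
      · rw [Set.indicator_of_notMem hy]
        symm
        simp only [hG]
        have hy' : (Set.Ioi (0:ℝ)).indicator (fun _ => (1:ℝ≥0∞)) y = 0 :=
          Set.indicator_of_notMem hy _
        simp [hy']
    rw [h3, lintegral_lintegral_swap hGm.aemeasurable]
    have h4 : ∀ u : ℝ, ∫⁻ y, G (y, u) ∂volume
        = (Set.Ioi (0:ℝ)).indicator (fun u => ∫⁻ y in Set.Ioo (0:ℝ) u, F y u ∂volume) u := by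
      intro u
      by_cases hu : u ∈ Set.Ioi (0:ℝ)
      · rw [Set.indicator_of_mem hu]
        rw [← lintegral_indicator measurableSet_Ioo _]
        apply lintegral_congr; intro y
        by_cases h0' : 0 < y <;> by_cases h1' : y < u <;>
          simp [hG, Set.indicator_apply, Set.mem_Ioo, h0', h1']
      · rw [Set.indicator_of_notMem hu]
        have hu' : ¬ (0:ℝ) < u := hu
        have hz : ∀ y : ℝ, G (y, u) = 0 := by
          intro y
          by_cases h0' : 0 < y
          · have h1' : ¬ y < u := by intro h; exact hu' (h0'.trans h)
            simp [hG, Set.indicator_apply, h0', h1']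
          · simp [hG, Set.indicator_apply, h0']
        simp [hz]
    simp only [h4]
    rw [lintegral_indicator measurableSet_Ioi _]
    apply setLIntegral_congr_fun measurableSet_Ioi
    intro u hu
    have hmeas : Measurable (fun y : ℝ => ENNReal.ofReal ((u - y) ^ n / c)) :=
      ENNReal.measurable_ofReal.comp (((measurable_const.sub measurable_id).pow_const n).div_const c)
    calc ∫⁻ y in Set.Ioo (0:ℝ) u, F y u ∂volume
        = ∫⁻ y in Set.Ioo (0:ℝ) u, f u * ENNReal.ofReal ((u - y) ^ n / c) ∂volume := rfl
      _ = f u * ∫⁻ y in Set.Ioo (0:ℝ) u, ENNReal.ofReal ((u - y) ^ n / c) ∂volume :=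
          lintegral_const_mul _ hmeas
      _ = f u * ENNReal.ofReal (u ^ (n + 1) / (Nat.factorial (n+1) : ℝ)) := by
          rw [hc, inner_pow n u (Set.mem_Ioi.mp hu)]

/-- the luckiness model complexity of the `N`-sample exponential model
with luckiness the indicator of `[θ_min, θ_max]` equals
`(N^N/Γ(N))·e^{−N}·log(θ_max/θ_min)`. Here the maximized likelihood at data `x` is
`p[(μ_{θ̂(x)})^N](x) = θ̂(x)^{−N} e^{−N}` with `θ̂(x) = (∑ xₙ)/N` the sample mean,
and the integral is over the data space `(ℝ≥0)^N` w.r.t. `N`-dimensional Lebesgue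
measure. -/
theorem exponential_LMC (N : ℕ) (hN : 0 < N) (θmin θmax : ℝ)
    (h0 : 0 < θmin) (h1 : θmin < θmax) :
    ∫⁻ x in {x : Fin N → ℝ | ∀ n, 0 ≤ x n},
        ENNReal.ofReal ((((∑ n, x n) / N)⁻¹) ^ N * Real.exp (-(N : ℝ)))
          * Set.indicator (Set.Icc θmin θmax) (fun _ => (1 : ℝ≥0∞)) ((∑ n, x n) / N)
        ∂volume
      = ENNReal.ofReal ((N ^ N / Real.Gamma N) * Real.exp (-(N : ℝ))
          * Real.log (θmax / θmin)) := by
  obtain ⟨k, rfl⟩ : ∃ k, N = k + 1 := ⟨N - 1, (Nat.succ_pred_eq_of_pos hN).symm⟩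
  set Nr : ℝ := ((k + 1 : ℕ) : ℝ) with hNrdef
  have hNr : (0:ℝ) < Nr := by positivity
  set f : ℝ → ℝ≥0∞ := fun s =>
    ENNReal.ofReal ((s / Nr)⁻¹ ^ (k+1) * Real.exp (-Nr))
      * Set.indicator (Set.Icc θmin θmax) (fun _ => (1 : ℝ≥0∞)) (s / Nr) with hfdef
  have hfm : Measurable f := by
    apply Measurable.mul
    · exact ENNReal.measurable_ofReal.comp
        (((measurable_id.div_const Nr).inv.pow_const (k+1)).mul_const _)
    · exact (measurable_const.indicator measurableSet_Icc).comp (measurable_id.div_const Nr)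
  set a : ℝ := Nr * θmin with hadef
  set b : ℝ := Nr * θmax with hbdef
  have ha : 0 < a := by positivity
  have hab : a < b := by
    apply mul_lt_mul_of_pos_left h1 hNr
  set C : ℝ := Nr ^ (k+1) * Real.exp (-Nr) / (Nat.factorial k : ℝ) with hCdef
  have hC : 0 ≤ C := by positivity
  have hfinal : ∫⁻ s in Set.Ioi (0:ℝ), f s
        * ENNReal.ofReal (s ^ k / (Nat.factorial k : ℝ)) ∂volume
      = ENNReal.ofReal (((k+1:ℕ) ^ (k+1) / Real.Gamma (k+1:ℕ)) * Real.exp (-Nr)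
          * Real.log (θmax / θmin)) := by
    have hcongr : Set.EqOn (fun s => f s * ENNReal.ofReal (s ^ k / (Nat.factorial k : ℝ)))
          (fun s => (Set.Icc a b).indicator (fun s => ENNReal.ofReal (C / s)) s) (Set.Ioi (0:ℝ)) := by
      intro s hs
      beta_reduce
      have hs0 : (0:ℝ) < s := hs
      by_cases hmem : s / Nr ∈ Set.Icc θmin θmax
      · have hmem' : s ∈ Set.Icc a b := by
          obtain ⟨hl, hr⟩ := hmem
          constructor
          · rw [le_div_iff₀ hNr] at hl; rw [hadef]; linarith
          · rw [div_le_iff₀ hNr] at hr; rw [hbdef]; linarith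
        rw [hfdef]
        simp only [Set.indicator_of_mem hmem, Set.indicator_of_mem hmem', mul_one]
        rw [← ENNReal.ofReal_mul (by positivity)]
        congr 1
        rw [inv_div, div_pow, hCdef]
        have hfac : (Nat.factorial k : ℝ) ≠ 0 := by positivity
        field_simp
        ring
      · have hmem' : s ∉ Set.Icc a b := by
          intro hcon
          apply hmem
          obtain ⟨hl, hr⟩ := hcon
          constructor
          · rw [le_div_iff₀ hNr]; rw [hadef] at hl; linarith
          · rw [div_le_iff₀ hNr]; rw [hbdef] at hr; linarith
        rw [hfdef]
        simp [Set.indicator_of_notMem hmem, Set.indicator_of_notMem hmem']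
    rw [setLIntegral_congr_fun measurableSet_Ioi hcongr]
    have hres : ∫⁻ s in Set.Ioi (0:ℝ),
          (Set.Icc a b).indicator (fun s => ENNReal.ofReal (C / s)) s ∂volume
        = ∫⁻ s in Set.Icc a b, ENNReal.ofReal (C / s) ∂volume := by
      rw [lintegral_indicator measurableSet_Icc, Measure.restrict_restrict measurableSet_Icc]
      congr 1
      rw [Set.inter_eq_left.mpr]
      exact fun x hx => lt_of_lt_of_le ha hx.1
    rw [hres]
    have hint : IntegrableOn (fun s : ℝ => C / s) (Set.Icc a b) volume := by
      apply ContinuousOn.integrableOn_compact isCompact_Icc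
      exact continuousOn_const.div continuousOn_id
        (fun x hx => ne_of_gt (lt_of_lt_of_le ha hx.1))
    have hnn : 0 ≤ᵐ[volume.restrict (Set.Icc a b)] fun s : ℝ => C / s := by
      filter_upwards [ae_restrict_mem measurableSet_Icc] with s hs
      exact div_nonneg hC (le_of_lt (lt_of_lt_of_le ha hs.1))
    rw [← ofReal_integral_eq_lintegral_ofReal hint hnn]
    congr 1
    rw [MeasureTheory.integral_Icc_eq_integral_Ioc, ← intervalIntegral.integral_of_le hab.le]
    simp_rw [div_eq_mul_inv]
    rw [intervalIntegral.integral_const_mul, integral_inv]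
    · have hba : b / a = θmax / θmin := by
        rw [hadef, hbdef, mul_div_mul_left _ _ (ne_of_gt hNr)]
      rw [hba]
      have hGamma : Real.Gamma ((k+1:ℕ):ℝ) = (Nat.factorial k : ℝ) := by
        push_cast
        exact Real.Gamma_nat_eq_factorial k
      rw [hGamma, hCdef, hNrdef]
      push_cast
      ring
    · rw [Set.uIcc_of_le hab.le]
      intro hcon
      exact absurd hcon.1 (not_le.mpr ha)
  exact (key k f hfm).trans hfinal
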